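/- Let p, q ∈ ℂ[x,y] with Jac(p,q) = p_x q_y − p_y q_x ∈ ℂ*. Then p and q have only finitely many common zeros in ℂ², i.e., the set {(a,b) ∈ ℂ² : p(a,b) = 0 and q(a,b) = 0} is finite. -/

import Mathlib

set_option synthInstance.maxHeartbeats 1000000
set_option maxHeartbeats 1000000

open MvPolynomial

noncomputable section

/-- The polynomial ring ℂ[x,y] (x = X 0, y = X 1). -/
abbrev Rxy : Type := MvPolynomial (Fin 2) ℂ

/-- The Jacobian Jac(p,q) = p_x q_y − p_y q_x. -/
def jacPQ (p q : Rxy) : Rxy :=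
  pderiv 0 p * pderiv 1 q - pderiv 1 p * pderiv 0 q

/-- (p,q) is a Keller map: Jac(p,q) is a nonzero constant. -/
def IsKeller (p q : Rxy) : Prop :=
  ∃ c : ℂ, c ≠ 0 ∧ jacPQ p q = C c

namespace KellerAux

abbrev Rx : Type := Polynomial ℂ
abbrev Kx : Type := FractionRing Rx

/-- Bezout-type identity for relatively prime bivariate polynomials. -/
lemma bezout_aux (P Q : Polynomial Rx) (hP : P ≠ 0) (h : IsRelPrime P Q) :
    ∃ (A B : Polynomial Rx) (f : Rx), f ≠ 0 ∧ A * P + B * Q = Polynomial.C f := by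
  classical
  set φ := algebraMap Rx Kx with hφ
  have hφinj : Function.Injective φ := IsFractionRing.injective _ _
  have hPm : P.map φ ≠ 0 := (Polynomial.map_ne_zero_iff hφinj).2 hP
  have hCunit : ∀ c : Rx, c ≠ 0 → IsUnit (Polynomial.C (φ c)) := by
    intro c hc
    refine Polynomial.isUnit_C.2 (isUnit_iff_ne_zero.2 ?_)
    intro hh
    exact hc (hφinj (by simpa using hh))
  have hassocPP : ∀ (T : Polynomial Rx), T ≠ 0 →
      Associated (T.map φ) (T.primPart.map φ) := by
    intro T hT
    conv_lhs => rw [T.eq_C_content_mul_primPart]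
    rw [Polynomial.map_mul, Polynomial.map_C]
    exact associated_unit_mul_left _ _
      (hCunit _ (fun hc => hT (Polynomial.content_eq_zero_iff.1 hc)))
  -- coprimality of the images in Kx[X]
  have hcop : IsCoprime (P.map φ) (Q.map φ) := by
    refine (EuclideanDomain.gcd_isUnit_iff (x := P.map φ) (y := Q.map φ)).mp ?_
    by_contra hu
    have hg0 : EuclideanDomain.gcd (P.map φ) (Q.map φ) ≠ 0 := by
      intro h0
      exact hPm (EuclideanDomain.gcd_eq_zero_iff.mp h0).1
    obtain ⟨g, gir, hgdvd⟩ := WfDvdMonoid.exists_irreducible_factor hu hg0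
    have hgP : g ∣ P.map φ := hgdvd.trans (EuclideanDomain.gcd_dvd_left _ _)
    have hgQ : g ∣ Q.map φ := hgdvd.trans (EuclideanDomain.gcd_dvd_right _ _)
    obtain ⟨⟨c, hc0⟩, hc⟩ := IsLocalization.integerNormalization_map_to_map
      (nonZeroDivisors Rx) g
    set n := IsLocalization.integerNormalization (nonZeroDivisors Rx) g with hn
    have hcne : (c : Rx) ≠ 0 := mem_nonZeroDivisors_iff_ne_zero.mp hc0
    have hcg : n.map φ = Polynomial.C (φ c) * g := by
      rw [hc, Algebra.smul_def]; rfl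
    have hg0' : g ≠ 0 := gir.ne_zero
    have hnm0 : n.map φ ≠ 0 := by
      rw [hcg]
      exact mul_ne_zero ((hCunit c hcne).ne_zero) hg0'
    have hn0 : n ≠ 0 := fun hh => hnm0 (by rw [hh, Polynomial.map_zero])
    have hassocg : Associated g (n.map φ) := by
      rw [hcg]; exact (associated_unit_mul_left _ _ (hCunit c hcne)).symm
    have hassocE : Associated g (n.primPart.map φ) := hassocg.trans (hassocPP n hn0)
    have heP : n.primPart ∣ P := by
      have h1 : n.primPart.map φ ∣ P.primPart.map φ :=
        ((hassocPP P hP).dvd_iff_dvd_right).1 (hassocE.dvd_iff_dvd_left.1 hgP)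
      exact (Polynomial.IsPrimitive.dvd_of_fraction_map_dvd_fraction_map (K := Kx)
        (Polynomial.isPrimitive_primPart n)
        h1).trans P.primPart_dvd
    have heQ : n.primPart ∣ Q := by
      rcases eq_or_ne Q 0 with rfl | hQ
      · exact dvd_zero _
      · have h1 : n.primPart.map φ ∣ Q.primPart.map φ :=
          ((hassocPP Q hQ).dvd_iff_dvd_right).1 (hassocE.dvd_iff_dvd_left.1 hgQ)
        exact (Polynomial.IsPrimitive.dvd_of_fraction_map_dvd_fraction_map (K := Kx)
          (Polynomial.isPrimitive_primPart n)
          h1).trans Q.primPart_dvd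
    have : IsUnit (n.primPart.map φ) := (h heP heQ).map (Polynomial.mapRingHom φ)
    exact gir.not_isUnit (hassocE.symm.isUnit this)
  obtain ⟨u, v, huv⟩ := hcop
  obtain ⟨⟨cu, hcu0⟩, hu⟩ := IsLocalization.integerNormalization_map_to_map
    (nonZeroDivisors Rx) u
  obtain ⟨⟨cv, hcv0⟩, hv⟩ := IsLocalization.integerNormalization_map_to_map
    (nonZeroDivisors Rx) v
  set a := IsLocalization.integerNormalization (nonZeroDivisors Rx) u with ha
  set b := IsLocalization.integerNormalization (nonZeroDivisors Rx) v with hb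
  have hcune : (cu : Rx) ≠ 0 := mem_nonZeroDivisors_iff_ne_zero.mp hcu0
  have hcvne : (cv : Rx) ≠ 0 := mem_nonZeroDivisors_iff_ne_zero.mp hcv0
  refine ⟨Polynomial.C cv * a, Polynomial.C cu * b, cu * cv, mul_ne_zero hcune hcvne, ?_⟩
  apply Polynomial.map_injective φ hφinj
  have hua : a.map φ = Polynomial.C (φ cu) * u := by rw [hu, Algebra.smul_def]; rfl
  have hvb : b.map φ = Polynomial.C (φ cv) * v := by rw [hv, Algebra.smul_def]; rfl
  rw [Polynomial.map_add, Polynomial.map_mul, Polynomial.map_mul, Polynomial.map_mul,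
    Polynomial.map_mul, hua, hvb, Polynomial.map_C, Polynomial.map_C, Polynomial.map_C,
    map_mul]
  calc Polynomial.C (φ cv) * (Polynomial.C (φ cu) * u) * P.map φ
        + Polynomial.C (φ cu) * (Polynomial.C (φ cv) * v) * Q.map φ
      = Polynomial.C (φ cu) * Polynomial.C (φ cv) * (u * P.map φ + v * Q.map φ) := by ring
    _ = Polynomial.C (φ cu * φ cv) := by rw [huv, mul_one, ← Polynomial.C_mul]

/-- One-variable coefficient ring `ℂ[Fin 1] ≃ ℂ[X]`. -/
def e1 : MvPolynomial (Fin 1) ℂ ≃+* Polynomial ℂ :=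
  (MvPolynomial.finSuccEquiv ℂ 0).toRingEquiv.trans
    (Polynomial.mapEquiv
      (MvPolynomial.isEmptyAlgEquiv ℂ (Fin 0) : MvPolynomial (Fin 0) ℂ ≃ₐ[ℂ] ℂ).toRingEquiv)

/-- ℂ[x,y] ≃ (ℂ[y])[x] (x outer). -/
def toPP : Rxy ≃+* Polynomial Rx :=
  (MvPolynomial.finSuccEquiv ℂ 1).toRingEquiv.trans (Polynomial.mapEquiv e1)

lemma e1_comp_eval (b : ℂ) :
    (Polynomial.evalRingHom b).comp (e1 : MvPolynomial (Fin 1) ℂ →+* Polynomial ℂ)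
      = (eval ![b] : MvPolynomial (Fin 1) ℂ →+* ℂ) := by
  apply MvPolynomial.ringHom_ext
  · intro r
    have h0 : (MvPolynomial.finSuccEquiv ℂ 0) (C r) = Polynomial.C (C r) := by
      simp [MvPolynomial.finSuccEquiv, MvPolynomial.optionEquivLeft_C]
    simp [e1, Polynomial.mapEquiv, h0]
    exact MvPolynomial.coeff_zero_C r
  · intro i
    fin_cases i
    simp [e1, Polynomial.mapEquiv, MvPolynomial.finSuccEquiv_X_zero]

lemma eval_toPP (p : Rxy) (a b : ℂ) :
    eval ![a, b] p = ((toPP p).map (Polynomial.evalRingHom b)).eval a := by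
  have h1 : (![a, b] : Fin 2 → ℂ) = Fin.cons a ![b] := rfl
  rw [h1, MvPolynomial.eval_eq_eval_mv_eval']
  have h2 : (toPP p).map (Polynomial.evalRingHom b)
      = (MvPolynomial.finSuccEquiv ℂ 1 p).map (eval ![b] : MvPolynomial (Fin 1) ℂ →+* ℂ) := by
    show ((Polynomial.mapEquiv e1) _).map _ = _
    rw [Polynomial.mapEquiv_apply, Polynomial.map_map, e1_comp_eval]
    rfl
  rw [h2]

/-- `IsRelPrime` transfers along ring equivalences. -/
lemma isRelPrime_map {R S : Type*} [CommRing R] [CommRing S] (e : R ≃+* S) {a b : R}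
    (h : IsRelPrime a b) : IsRelPrime (e a) (e b) := by
  intro d hd1 hd2
  have h1 : e.symm d ∣ a := by
    have := map_dvd (e.symm : S →+* R) hd1
    simpa using this
  have h2 : e.symm d ∣ b := by
    have := map_dvd (e.symm : S →+* R) hd2
    simpa using this
  have := (h h1 h2).map (e : R →+* S)
  simpa using this

/-- Keller pairs have no common nonunit factor. -/
lemma keller_isRelPrime {p q : Rxy} (hK : IsKeller p q) : IsRelPrime p q := by
  obtain ⟨c, hc0, hc⟩ := hK
  rintro d ⟨a, rfl⟩ ⟨b, rfl⟩
  have key : jacPQ (d * a) (d * b)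
      = d * (pderiv 0 d * a * pderiv 1 b + pderiv 0 a * pderiv 1 d * b
          - pderiv 1 d * a * pderiv 0 b - pderiv 1 a * pderiv 0 d * b
          + d * (pderiv 0 a * pderiv 1 b - pderiv 1 a * pderiv 0 b)) := by
    simp only [jacPQ, pderiv_mul]
    ring
  have hdvd : d ∣ C c := by
    rw [← hc, key]
    exact Dvd.intro _ rfl
  exact isUnit_of_dvd_unit hdvd ((isUnit_iff_ne_zero.2 hc0).map (C : ℂ →+* Rxy))

lemma keller_ne_zero {p q : Rxy} (hK : IsKeller p q) : p ≠ 0 ∧ q ≠ 0 := by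
  obtain ⟨c, hc0, hc⟩ := hK
  constructor
  · rintro rfl
    apply hc0
    have : jacPQ 0 q = 0 := by simp [jacPQ]
    rw [this] at hc
    have h1 : (C c : Rxy) = C (0 : ℂ) := by simpa using hc.symm
    exact MvPolynomial.C_injective _ _ h1
  · rintro rfl
    apply hc0
    have : jacPQ p 0 = 0 := by simp [jacPQ]
    rw [this] at hc
    have h1 : (C c : Rxy) = C (0 : ℂ) := by simpa using hc.symm
    exact MvPolynomial.C_injective _ _ h1

/-- The second coordinates of common zeros of relatively prime polynomials satisfy
a nonzero one-variable polynomial. -/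
lemma exists_poly_snd (p q : Rxy) (hp : p ≠ 0) (h : IsRelPrime p q) :
    ∃ f : Polynomial ℂ, f ≠ 0 ∧ ∀ z : ℂ × ℂ,
      eval ![z.1, z.2] p = 0 → eval ![z.1, z.2] q = 0 → f.eval z.2 = 0 := by
  have hP0 : toPP p ≠ 0 := by
    intro hh
    exact hp (by simpa using toPP.injective (by simpa using hh))
  obtain ⟨A, B, f, hf0, hsum⟩ := bezout_aux (toPP p) (toPP q) hP0 (isRelPrime_map toPP h)
  refine ⟨f, hf0, ?_⟩
  intro z hzp hzq
  have := congrArg (fun T : Polynomial Rx =>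
    (T.map (Polynomial.evalRingHom z.2)).eval z.1) hsum
  simp only [Polynomial.map_add, Polynomial.map_mul, Polynomial.eval_add, Polynomial.eval_mul,
    Polynomial.map_C, Polynomial.eval_C, Polynomial.coe_evalRingHom] at this
  rw [← eval_toPP, ← eval_toPP, hzp, hzq] at this
  simpa using this.symm
end KellerAux

open KellerAux in
/-- A Keller pair (p,q) has only finitely many common zeros in ℂ². -/
theorem keller_finitely_many_common_zeros (p q : Rxy) (hK : IsKeller p q) :
    Set.Finite {z : ℂ × ℂ | eval ![z.1, z.2] p = 0 ∧ eval ![z.1, z.2] q = 0} := by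
  obtain ⟨hp0, hq0⟩ := keller_ne_zero hK
  have hrel : IsRelPrime p q := keller_isRelPrime hK
  -- second coordinates
  obtain ⟨f, hf0, hf⟩ := exists_poly_snd p q hp0 hrel
  -- first coordinates, via swapping the variables
  set σ : Fin 2 ≃ Fin 2 := Equiv.swap 0 1 with hσ
  set p' : Rxy := rename σ p with hp'
  set q' : Rxy := rename σ q with hq'
  have hswap : ∀ (r : Rxy) (z : ℂ × ℂ),
      eval ![z.2, z.1] (rename σ r) = eval ![z.1, z.2] r := by
    intro r z
    rw [MvPolynomial.eval_rename]
    have hcomp : (![z.2, z.1] ∘ σ : Fin 2 → ℂ) = ![z.1, z.2] := by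
      funext i
      fin_cases i <;> simp [hσ]
    rw [hcomp]
  have hp'0 : p' ≠ 0 := by
    intro hh
    exact hp0 ((MvPolynomial.renameEquiv ℂ σ).injective (by simpa [hp'] using hh))
  have hrel' : IsRelPrime p' q' :=
    isRelPrime_map (MvPolynomial.renameEquiv ℂ σ).toRingEquiv hrel
  obtain ⟨g, hg0, hg⟩ := exists_poly_snd p' q' hp'0 hrel'
  -- combine
  refine Set.Finite.subset ((Polynomial.finite_setOf_isRoot hg0).prod
    (Polynomial.finite_setOf_isRoot hf0)) ?_
  rintro z ⟨hzp, hzq⟩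
  refine ⟨?_, hf z hzp hzq⟩
  have h1 : eval ![(z.2, z.1).1, (z.2, z.1).2] p' = 0 := by
    rw [hp']
    show eval ![z.2, z.1] (rename σ p) = 0
    rw [hswap p z]; exact hzp
  have h2 : eval ![(z.2, z.1).1, (z.2, z.1).2] q' = 0 := by
    rw [hq']
    show eval ![z.2, z.1] (rename σ q) = 0
    rw [hswap q z]; exact hzq
  have := hg (z.2, z.1) h1 h2
  simpa using this
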